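/- Let n = m ≥ 1 and d ≥ 1 be integers. With P_i = d·e_{u_i} (2 ≤ i ≤ n), Q_j = d·e_{v_j} (1 ≤ j ≤ n), and R = (−d,…,−d,d,…,d) in ℝ^{2n-1}, the convex hull Δ of {0, P_i, Q_j, R} is exactly the set of points satisfying u_i + v_j ≥ 0 for all i,j, v_j ≥ 0 for all j, and ∑_i u_i + ∑_j v_j ≤ d. Moreover all points P_i, Q_j, R lie on the hyperplane ∑_i u_i + ∑_j v_j = d. -/

import Mathlib

open Sum

/-- The vertex `P_i = d·e_{u_i}` of the Newton polytope of `f_a`. -/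
def Ppt (n m d : ℕ) (i : Fin (n - 1)) : Fin (n - 1) ⊕ Fin m → ℝ :=
  fun k => if k = Sum.inl i then (d : ℝ) else 0

/-- The vertex `Q_j = d·e_{v_j}` of the Newton polytope of `f_a`. -/
def Qpt (n m d : ℕ) (j : Fin m) : Fin (n - 1) ⊕ Fin m → ℝ :=
  fun k => if k = Sum.inr j then (d : ℝ) else 0

/-- The vertex `R` (all `u`-coordinates `-d`, all `v`-coordinates `d`). -/
def Rpt (n m d : ℕ) : Fin (n - 1) ⊕ Fin m → ℝ :=
  Sum.elim (fun _ => -(d : ℝ)) (fun _ => (d : ℝ))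

/-- The Newton polytope `Δ(f_a)`: convex hull of `0`, the `P_i`, the `Q_j` and `R`. -/
def NPolytope (n m d : ℕ) : Set (Fin (n - 1) ⊕ Fin m → ℝ) :=
  convexHull ℝ
    (insert 0 (insert (Rpt n m d) (Set.range (Ppt n m d) ∪ Set.range (Qpt n m d))))


/-- for `n = m ≥ 1`, `d ≥ 1`, the Newton polytope is cut out by
`u_i + v_j ≥ 0`, `v_j ≥ 0` and `∑u + ∑v ≤ d`; moreover all the points `P_i`, `Q_j`, `R`
lie on the hyperplane `∑u + ∑v = d`. -/
theorem stmt4 (n d : ℕ) (hn : 1 ≤ n) (hd : 1 ≤ d) :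
    (NPolytope n n d
      = {x : Fin (n - 1) ⊕ Fin n → ℝ |
          (∀ i j, 0 ≤ x (inl i) + x (inr j)) ∧ (∀ j, 0 ≤ x (inr j)) ∧
          ((∑ i, x (inl i)) + ∑ j, x (inr j)) ≤ d})
    ∧ (∀ i : Fin (n - 1),
        (∑ k, Ppt n n d i (inl k)) + ∑ j, Ppt n n d i (inr j) = d)
    ∧ (∀ j0 : Fin n,
        (∑ k, Qpt n n d j0 (inl k)) + ∑ j, Qpt n n d j0 (inr j) = d)
    ∧ ((∑ k, Rpt n n d (inl k)) + ∑ j, Rpt n n d (inr j) = d) := by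
  have hdR : (0:ℝ) < d := by exact_mod_cast hd
  have hdne : (d:ℝ) ≠ 0 := ne_of_gt hdR
  have hcard : ((n - 1 : ℕ) : ℝ) = (n : ℝ) - 1 := by
    rw [Nat.cast_sub hn]; simp
  have hPsum : ∀ i : Fin (n - 1),
      (∑ k, Ppt n n d i (inl k)) + ∑ j : Fin n, Ppt n n d i (inr j) = d := by
    intro i
    simp [Ppt, Finset.sum_ite_eq']
  have hQsum : ∀ j0 : Fin n,
      (∑ k, Qpt n n d j0 (inl k)) + ∑ j : Fin n, Qpt n n d j0 (inr j) = d := by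
    intro j0
    simp [Qpt, Finset.sum_ite_eq']
  have hRsum : (∑ k, Rpt n n d (inl k)) + ∑ j : Fin n, Rpt n n d (inr j) = d := by
    simp only [Rpt, Sum.elim_inl, Sum.elim_inr, Finset.sum_const, Finset.card_univ,
      Fintype.card_fin, nsmul_eq_mul]
    rw [hcard]; ring
  refine ⟨?_, hPsum, hQsum, hRsum⟩
  apply Set.Subset.antisymm
  · -- convex hull ⊆ polyhedron
    apply convexHull_min
    · rintro p hp
      simp only [Set.mem_insert_iff, Set.mem_union, Set.mem_range] at hp
      rcases hp with rfl | rfl | ⟨i, rfl⟩ | ⟨j, rfl⟩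
      · exact ⟨fun _ _ => by simp, fun _ => by simp, by simp⟩
      · refine ⟨fun i j => by simp [Rpt], fun j => by simp [Rpt],
          le_of_eq hRsum⟩
      · refine ⟨fun i' j => ?_, fun j => by simp [Ppt], le_of_eq (hPsum i)⟩
        simp only [Ppt]
        split <;> simp [hdR.le]
      · refine ⟨fun i' j => ?_, fun j => ?_, le_of_eq (hQsum j)⟩
        · simp only [Qpt]
          split <;> split <;> simp_all [hdR.le]
        · simp only [Qpt]
          split <;> simp [hdR.le]
    · -- convexity of the polyhedron
      intro x hx y hy a b ha hb hab
      obtain ⟨hx1, hx2, hx3⟩ := hx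
      obtain ⟨hy1, hy2, hy3⟩ := hy
      refine ⟨fun i j => ?_, fun j => ?_, ?_⟩
      · have h1 := hx1 i j; have h2 := hy1 i j
        simp only [Pi.add_apply, Pi.smul_apply, smul_eq_mul]
        nlinarith
      · have h1 := hx2 j; have h2 := hy2 j
        simp only [Pi.add_apply, Pi.smul_apply, smul_eq_mul]
        nlinarith
      · simp only [Pi.add_apply, Pi.smul_apply, smul_eq_mul,
          Finset.sum_add_distrib, ← Finset.mul_sum]
        nlinarith
  · -- polyhedron ⊆ convex hull
    rintro x ⟨h1, h2, h3⟩
    haveI : Nonempty (Fin n) := ⟨⟨0, hn⟩⟩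
    have hne : (Finset.univ : Finset (Fin n)).Nonempty := Finset.univ_nonempty
    set μ : ℝ := Finset.univ.inf' hne (fun j => x (inr j)) with hμdef
    have hμle : ∀ j, μ ≤ x (inr j) := fun j => Finset.inf'_le _ (Finset.mem_univ j)
    obtain ⟨j0, -, hj0⟩ := Finset.exists_mem_eq_inf' hne (fun j => x (inr j))
    have hμx : μ = x (inr j0) := hμdef.trans hj0
    have hμ0 : 0 ≤ μ := hμx ▸ h2 j0
    have hμu : ∀ i, 0 ≤ x (inl i) + μ := fun i => by
      have := h1 i j0; rw [hμx]; linarith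
    set Su : ℝ := ∑ i, x (inl i) with hSu
    set Sv : ℝ := ∑ j, x (inr j) with hSv
    let ι := Option (Option (Fin (n - 1) ⊕ Fin n))
    let w : ι → ℝ := fun k =>
      match k with
      | none => 1 - (Su + Sv) / d
      | some none => μ / d
      | some (some (inl i)) => (x (inl i) + μ) / d
      | some (some (inr j)) => (x (inr j) - μ) / d
    let z : ι → (Fin (n - 1) ⊕ Fin n → ℝ) := fun k =>
      match k with
      | none => 0
      | some none => Rpt n n d
      | some (some (inl i)) => Ppt n n d i
      | some (some (inr j)) => Qpt n n d j
    have w0 : w none = 1 - (Su + Sv) / d := rfl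
    have wR : w (some none) = μ / d := rfl
    have wP : ∀ i, w (some (some (inl i))) = (x (inl i) + μ) / d := fun _ => rfl
    have wQ : ∀ j, w (some (some (inr j))) = (x (inr j) - μ) / d := fun _ => rfl
    have z0 : z none = 0 := rfl
    have zR : z (some none) = Rpt n n d := rfl
    have zP : ∀ i, z (some (some (inl i))) = Ppt n n d i := fun _ => rfl
    have zQ : ∀ j, z (some (some (inr j))) = Qpt n n d j := fun _ => rfl
    have hw0 : ∀ k ∈ (Finset.univ : Finset ι), 0 ≤ w k := by
      rintro (_ | _ | i | j) -
      · rw [w0]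
        have : (Su + Sv) / d ≤ 1 := by rw [div_le_one hdR]; exact h3
        linarith
      · rw [wR]; exact div_nonneg hμ0 hdR.le
      · rw [wP]; exact div_nonneg (hμu i) hdR.le
      · rw [wQ]; exact div_nonneg (by have := hμle j; linarith) hdR.le
    have hsum : ∑ k : ι, w k = 1 := by
      rw [Fintype.sum_option, Fintype.sum_option, Fintype.sum_sum_type, w0, wR]
      simp only [wP, wQ]
      have e1 : ∑ i : Fin (n - 1), (x (inl i) + μ) / d
          = (Su + ((n : ℝ) - 1) * μ) / d := by
        rw [← Finset.sum_div, Finset.sum_add_distrib, Finset.sum_const,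
          Finset.card_univ, Fintype.card_fin, nsmul_eq_mul, hcard, ← hSu]
      have e2 : ∑ j : Fin n, (x (inr j) - μ) / d = (Sv - (n : ℝ) * μ) / d := by
        rw [← Finset.sum_div, Finset.sum_sub_distrib, Finset.sum_const,
          Finset.card_univ, Fintype.card_fin, nsmul_eq_mul, ← hSv]
      rw [e1, e2]
      field_simp
      ring
    have hzmem : ∀ k ∈ (Finset.univ : Finset ι),
        z k ∈ insert (0 : Fin (n - 1) ⊕ Fin n → ℝ)
          (insert (Rpt n n d) (Set.range (Ppt n n d) ∪ Set.range (Qpt n n d))) := by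
      rintro (_ | _ | i | j) -
      · exact Set.mem_insert _ _
      · exact Set.mem_insert_of_mem _ (Set.mem_insert _ _)
      · exact Set.mem_insert_of_mem _ (Set.mem_insert_of_mem _ (Or.inl ⟨i, zP i⟩))
      · exact Set.mem_insert_of_mem _ (Set.mem_insert_of_mem _ (Or.inr ⟨j, zQ j⟩))
    have hx_eq : Finset.univ.centerMass w z = x := by
      rw [Finset.centerMass_eq_of_sum_1 _ _ hsum]
      funext c
      rw [Finset.sum_apply]
      simp only [Pi.smul_apply, smul_eq_mul]
      rw [Fintype.sum_option, Fintype.sum_option, Fintype.sum_sum_type,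
        w0, wR, z0, zR]
      simp only [wP, wQ, zP, zQ, Pi.zero_apply, mul_zero]
      cases c with
      | inl i =>
        have eP : ∑ i' : Fin (n - 1), (x (inl i') + μ) / d * Ppt n n d i' (inl i)
            = (x (inl i) + μ) / d * d := by
          simp only [Ppt, Sum.inl.injEq, mul_ite, mul_zero]
          simp [Finset.sum_ite_eq]
        have eQ : ∑ j : Fin n, (x (inr j) - μ) / d * Qpt n n d j (inl i) = 0 := by
          simp [Qpt]
        rw [eP, eQ, Rpt]
        simp only [Sum.elim_inl]
        field_simp
        ring
      | inr j =>
        have eP : ∑ i' : Fin (n - 1), (x (inl i') + μ) / d * Ppt n n d i' (inr j)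
            = 0 := by
          simp [Ppt]
        have eQ : ∑ j' : Fin n, (x (inr j') - μ) / d * Qpt n n d j' (inr j)
            = (x (inr j) - μ) / d * d := by
          simp only [Qpt, Sum.inr.injEq, mul_ite, mul_zero]
          simp [Finset.sum_ite_eq]
        rw [eP, eQ, Rpt]
        simp only [Sum.elim_inr]
        field_simp
        ring
    rw [NPolytope, ← hx_eq]
    exact Finset.centerMass_mem_convexHull _ hw0 (by rw [hsum]; norm_num) hzmem
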